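/- The polynomial X²(Y−X²)² does not belong to the ℂ-subalgebra of ℂ[X,Y] generated by X²Y and X²+Y; consequently, the extension ℂ[X²Y, X²+Y] ⊆ ℂ[X,Y] is not well-ramified. -/

import Mathlib

noncomputable section

open MvPolynomial

/-- The multiplicity of `Q` in the factorization of `P` equals `e`. -/
def MultIs {σ : Type} (Q P : MvPolynomial σ ℂ) (e : ℕ) : Prop :=
  Q ^ e ∣ P ∧ ¬ Q ^ (e + 1) ∣ P

/-- `RamIdx A Q e` : the contraction `QB ∩ A` is generated by an irreducible `P ∈ A`,
and `e` is the multiplicity of `Q` in the factorization of `P` in `B`. -/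
def RamIdx {σ : Type} (A : Subalgebra ℂ (MvPolynomial σ ℂ))
    (Q : MvPolynomial σ ℂ) (e : ℕ) : Prop :=
  ∃ P : A, Irreducible P ∧
    (Ideal.span {Q}).comap (algebraMap A (MvPolynomial σ ℂ)) = Ideal.span {P} ∧
    MultIs Q (P : MvPolynomial σ ℂ) e

/-- `Q` is a ramified irreducible of `B` over `A`. -/
def IsRamified {σ : Type} (A : Subalgebra ℂ (MvPolynomial σ ℂ))
    (Q : MvPolynomial σ ℂ) : Prop :=
  Irreducible Q ∧ ∃ e, RamIdx A Q e ∧ 1 < e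

/-- `RamReps A S e` : `S` is a finite set of pairwise non-associated irreducible elements of `B`,
each ramified with ramification index `e Q`, and every ramified irreducible of `B` is associated
to exactly one element of `S`. -/
def RamReps {σ : Type} (A : Subalgebra ℂ (MvPolynomial σ ℂ))
    (S : Finset (MvPolynomial σ ℂ)) (e : MvPolynomial σ ℂ → ℕ) : Prop :=
  (∀ Q ∈ S, Irreducible Q ∧ RamIdx A Q (e Q) ∧ 1 < e Q) ∧
  (∀ Q ∈ S, ∀ Q' ∈ S, Q ≠ Q' → ¬ Associated Q Q') ∧
  (∀ Q : MvPolynomial σ ℂ, IsRamified A Q → ∃! Q', Q' ∈ S ∧ Associated Q Q')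

/-- The variable `X` of `ℂ[X,Y]`. -/
def Xv : MvPolynomial (Fin 2) ℂ := X 0

/-- The variable `Y` of `ℂ[X,Y]`. -/
def Yv : MvPolynomial (Fin 2) ℂ := X 1

/-- The subalgebra `A = ℂ[X²Y, X²+Y]` of `B = ℂ[X,Y]`. -/
def A16 : Subalgebra ℂ (MvPolynomial (Fin 2) ℂ) :=
  Algebra.adjoin ℂ {Xv ^ 2 * Yv, Xv ^ 2 + Yv}

namespace NWRAux
abbrev Bp : Type := MvPolynomial (Fin 2) ℂ
def uP : Bp := Xv ^ 2 * Yv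
def vP : Bp := Xv ^ 2 + Yv
lemma uP_mem : uP ∈ A16 := Algebra.subset_adjoin (by left; rfl)
lemma vP_mem : vP ∈ A16 := Algebra.subset_adjoin (by right; rfl)

/-- The subalgebra of `ℂ[x]` of polynomials supported in degrees divisible by 4. -/
def coeffOK : Subalgebra ℂ (Polynomial ℂ) where
  carrier := {p | ∀ n, ¬ (4 ∣ n) → p.coeff n = 0}
  mul_mem' := by
    intro p q hp hq n hn
    rw [Polynomial.coeff_mul]
    refine Finset.sum_eq_zero fun x hx => ?_
    rw [Finset.HasAntidiagonal.mem_antidiagonal] at hx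
    by_cases h1 : (4:ℕ) ∣ x.1
    · have h2 : ¬ (4:ℕ) ∣ x.2 := fun h2 => hn (hx ▸ dvd_add h1 h2)
      rw [hq x.2 h2, mul_zero]
    · rw [hp x.1 h1, zero_mul]
  add_mem' := by
    intro p q hp hq n hn
    rw [Polynomial.coeff_add, hp n hn, hq n hn, add_zero]
  algebraMap_mem' := by
    intro c n hn
    have hn0 : n ≠ 0 := fun h => hn (h ▸ dvd_zero 4)
    simp [Polynomial.algebraMap_apply, Polynomial.coeff_C, hn0]

def toOne : Bp →ₐ[ℂ] Polynomial ℂ :=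
  MvPolynomial.aeval ![Polynomial.X, -(Polynomial.X ^ 2)]

@[simp] lemma toOne_Xv : toOne Xv = Polynomial.X := by simp [toOne, Xv]
@[simp] lemma toOne_Yv : toOne Yv = -(Polynomial.X ^ 2) := by simp [toOne, Yv]

lemma toOne_mem_coeffOK {p : Bp} (hp : p ∈ A16) : toOne p ∈ coeffOK := by
  have h : A16 ≤ coeffOK.comap toOne := by
    apply Algebra.adjoin_le
    rintro x (rfl | rfl)
    · intro n hn
      have hn4 : n ≠ 4 := fun h => hn (by rw [h])
      have he : toOne (Xv ^ 2 * Yv) = -(Polynomial.X ^ 4) := by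
        simp only [map_mul, map_pow, toOne_Xv, toOne_Yv]; ring
      show (toOne (Xv ^ 2 * Yv)).coeff n = 0
      rw [he, Polynomial.coeff_neg, Polynomial.coeff_X_pow]
      simp [hn4]
    · intro n hn
      have he : toOne (Xv ^ 2 + Yv) = 0 := by
        simp only [map_add, map_pow, toOne_Xv, toOne_Yv]; ring
      show (toOne (Xv ^ 2 + Yv)).coeff n = 0
      rw [he, Polynomial.coeff_zero]
  exact h hp

lemma not_mem_A16 (w : Bp) (hw : IsUnit w) :
    Xv ^ 2 * (Yv - Xv ^ 2) ^ 2 * w ∉ A16 := by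
  intro hmem
  have h4 := toOne_mem_coeffOK hmem
  obtain ⟨c, hc, hcw⟩ := Polynomial.isUnit_iff.mp (hw.map toOne)
  have hval : toOne (Xv ^ 2 * (Yv - Xv ^ 2) ^ 2 * w)
      = Polynomial.C (4 * c) * Polynomial.X ^ 6 := by
    simp only [map_mul, map_pow, map_sub, toOne_Xv, toOne_Yv, ← hcw,
      Polynomial.C_mul, map_ofNat]
    ring
  have h6 := h4 6 (by norm_num)
  rw [hval, Polynomial.coeff_C_mul, Polynomial.coeff_X_pow] at h6
  simp only [if_true, mul_one] at h6
  have h4c : (4:ℂ) * c ≠ 0 := mul_ne_zero (by norm_num) hc.ne_zero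
  exact h4c h6


/-- The algebra map `ℂ[t][s] → ℂ[X,Y]`, `s ↦ X²Y`, `t ↦ X²+Y`. -/
def Φ : Polynomial (Polynomial ℂ) →ₐ[ℂ] Bp :=
  Polynomial.aevalTower (Polynomial.aeval vP) uP

@[simp] lemma Φ_X : Φ Polynomial.X = uP := Polynomial.aevalTower_X _ _
@[simp] lemma Φ_C (c : Polynomial ℂ) : Φ (Polynomial.C c) = Polynomial.aeval vP c :=
  Polynomial.aevalTower_C _ _ _

lemma Φ_apply (f : Polynomial (Polynomial ℂ)) :
    Φ f = Polynomial.eval₂ ((Polynomial.aeval vP).toRingHom :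
      Polynomial ℂ →+* Bp) uP f := rfl

/-- Composing `Φ` with an algebra hom out of `B`. -/
lemma algHom_Φ {R : Type*} [CommRing R] [Algebra ℂ R] (ρ : Bp →ₐ[ℂ] R)
    (f : Polynomial (Polynomial ℂ)) :
    ρ (Φ f) = Polynomial.eval₂ ((Polynomial.aeval (ρ vP)).toRingHom :
      Polynomial ℂ →+* R) (ρ uP) f := by
  rw [Φ_apply]
  rw [show (ρ (Polynomial.eval₂ _ uP f) : R)
    = ρ.toRingHom (Polynomial.eval₂ ((Polynomial.aeval vP).toRingHom) uP f) from rfl]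
  rw [Polynomial.hom_eval₂]
  congr 1
  ext c
  · simp
  · simp [Polynomial.aeval_algHom_apply]

/-- evaluation of `B` at a point of `ℂ²`. -/
def evp (a b : ℂ) : Bp →ₐ[ℂ] ℂ := MvPolynomial.aeval ![a, b]

lemma Φ_injective : Function.Injective Φ := by
  rw [injective_iff_map_eq_zero]
  intro f hf
  have key : ∀ t₀ s₀ : ℂ, Polynomial.eval s₀ (f.map (Polynomial.evalRingHom t₀)) = 0 := by
    intro t₀ s₀
    -- find a point (a,b) with a²b = s₀, a²+b = t₀
    obtain ⟨a, ha⟩ : ∃ a : ℂ, (Polynomial.X ^ 4 - Polynomial.C t₀ * Polynomial.X ^ 2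
        + Polynomial.C s₀ : Polynomial ℂ).IsRoot a := by
      apply Complex.exists_root
      have : (Polynomial.X ^ 4 - Polynomial.C t₀ * Polynomial.X ^ 2
          + Polynomial.C s₀ : Polynomial ℂ).natDegree = 4 := by
        compute_degree!
      rw [Polynomial.degree_eq_natDegree (fun h0 => by simp [h0] at this), this]
      norm_num
    set b : ℂ := t₀ - a ^ 2 with hb
    have hroot : a ^ 4 - t₀ * a ^ 2 + s₀ = 0 := by
      simpa [Polynomial.IsRoot] using ha
    have h1 : a ^ 2 * b = s₀ := by rw [hb]; ring_nf; linear_combination -hroot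
    have h2 : a ^ 2 + b = t₀ := by rw [hb]; ring
    have := congrArg (evp a b) hf
    rw [algHom_Φ, map_zero] at this
    have hu : evp a b uP = s₀ := by simp [evp, uP, Xv, Yv, h1]
    have hv : evp a b vP = t₀ := by simp [evp, vP, Xv, Yv, h2]
    rw [hu, hv] at this
    rw [Polynomial.eval_map, ← this]
    congr 1
  have key2 : ∀ t₀ : ℂ, f.map (Polynomial.evalRingHom t₀) = 0 := by
    intro t₀
    apply Polynomial.funext
    intro s₀
    rw [key t₀ s₀, Polynomial.eval_zero]
  have key3 : ∀ n, f.coeff n = 0 := by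
    intro n
    apply Polynomial.funext
    intro t₀
    have := congrArg (fun p => Polynomial.coeff p n) (key2 t₀)
    simpa [Polynomial.coeff_map] using this
  exact Polynomial.ext key3


lemma Φ_range : Φ.range = A16 := by
  apply le_antisymm
  · rintro x ⟨f, rfl⟩
    show Φ f ∈ A16
    induction f using Polynomial.induction_on with
    | C c =>
      rw [Φ_C]
      have h1 : Algebra.adjoin ℂ {vP} ≤ A16 := by
        apply Algebra.adjoin_le; simp [vP_mem]
      exact h1 (Polynomial.aeval_mem_adjoin_singleton ℂ vP)
    | add p q hp hq => rw [map_add]; exact add_mem hp hq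
    | monomial n c hp =>
      have : (Polynomial.C c * Polynomial.X ^ (n + 1) : Polynomial (Polynomial ℂ))
          = Polynomial.C c * Polynomial.X ^ n * Polynomial.X := by ring
      rw [this, map_mul, Φ_X]
      exact mul_mem hp uP_mem
  · apply Algebra.adjoin_le
    rintro x (rfl | rfl)
    · exact ⟨Polynomial.X, by show Φ Polynomial.X = _; rw [Φ_X, uP]⟩
    · exact ⟨Polynomial.C Polynomial.X,
        by show Φ (Polynomial.C Polynomial.X) = _; rw [Φ_C]; simp [vP]⟩

/-- `ℂ[t][s] ≃ A16`. -/
def ΦE : Polynomial (Polynomial ℂ) ≃ₐ[ℂ] A16 :=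
  (AlgEquiv.ofInjective Φ Φ_injective).trans (Subalgebra.equivOfEq _ _ Φ_range)

@[simp] lemma ΦE_val (f : Polynomial (Polynomial ℂ)) : (ΦE f : Bp) = Φ f := rfl

lemma irreducible_ΦE {f : Polynomial (Polynomial ℂ)} :
    Irreducible (ΦE f) ↔ Irreducible f := by
  have h := MulEquiv.irreducible_iff (M := Polynomial (Polynomial ℂ)) (N := A16)
    ΦE.toMulEquiv (x := f)
  simpa using h

/-- transfer of irreducibility through `ΦE` -/
lemma irreducible_of_val {P : A16} (hP : Irreducible P) {f : Polynomial (Polynomial ℂ)}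
    (hf : Φ f = (P : Bp)) : Irreducible f := by
  have : ΦE f = P := Subtype.ext (by simpa using hf)
  exact irreducible_ΦE.mp (this ▸ hP)

/-- The equivalence `B ≃ (ℂ[x])[Y]` isolating the second variable. -/
def Ey : Bp ≃ₐ[ℂ] Polynomial (MvPolynomial (Fin 1) ℂ) :=
  (MvPolynomial.renameEquiv ℂ (Equiv.swap 0 1)).trans (MvPolynomial.finSuccEquiv ℂ 1)

@[simp] lemma Ey_Yv : Ey Yv = Polynomial.X := by
  rw [Ey, AlgEquiv.trans_apply, Yv, MvPolynomial.renameEquiv_apply, MvPolynomial.rename_X,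
    Equiv.swap_apply_right, MvPolynomial.finSuccEquiv_X_zero]

@[simp] lemma Ey_Xv : Ey Xv = Polynomial.C (X 0) := by
  have h1 : ((1 : Fin 2)) = Fin.succ 0 := rfl
  rw [Ey, AlgEquiv.trans_apply, Xv, MvPolynomial.renameEquiv_apply, MvPolynomial.rename_X,
    Equiv.swap_apply_left, h1, MvPolynomial.finSuccEquiv_X_succ]

/-- The equivalence `B ≃ (ℂ[y])[X]` isolating the first variable. -/
def Ex : Bp ≃ₐ[ℂ] Polynomial (MvPolynomial (Fin 1) ℂ) := MvPolynomial.finSuccEquiv ℂ 1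

@[simp] lemma Ex_Xv : Ex Xv = Polynomial.X := MvPolynomial.finSuccEquiv_X_zero
@[simp] lemma Ex_Yv : Ex Yv = Polynomial.C (X 0) := by
  have h1 : ((1 : Fin 2)) = Fin.succ 0 := rfl
  rw [Ex, Yv, h1, MvPolynomial.finSuccEquiv_X_succ]

lemma irreducible_Xv : Irreducible Xv := by
  have h : Irreducible (Ex.toMulEquiv Xv) := by
    show Irreducible (Ex Xv)
    rw [Ex_Xv]; exact Polynomial.prime_X.irreducible
  exact (MulEquiv.irreducible_iff Ex.toMulEquiv).mp h

lemma irreducible_YsubX2 : Irreducible (Yv - Xv ^ 2) := by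
  apply (MulEquiv.irreducible_iff Ey.toMulEquiv).mp
  show Irreducible (Ey (Yv - Xv ^ 2))
  have : Ey (Yv - Xv ^ 2) = Polynomial.X - Polynomial.C ((X 0 : MvPolynomial (Fin 1) ℂ) ^ 2) := by
    rw [map_sub, map_pow, Ey_Yv, Ey_Xv, ← map_pow]
  rw [this]
  exact Polynomial.irreducible_X_sub_C _

lemma irreducible_vP_sub (r : ℂ) : Irreducible (vP - MvPolynomial.C r) := by
  apply (MulEquiv.irreducible_iff Ey.toMulEquiv).mp
  show Irreducible (Ey (vP - MvPolynomial.C r))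
  have : Ey (vP - MvPolynomial.C r)
      = Polynomial.X - Polynomial.C
        (MvPolynomial.C r - (X 0 : MvPolynomial (Fin 1) ℂ) ^ 2) := by
    have hC : Ey (MvPolynomial.C r : Bp) = Polynomial.C (MvPolynomial.C r) := by
      have h0 : (MvPolynomial.C r : Bp) = algebraMap ℂ Bp r := rfl
      rw [h0, AlgEquiv.commutes]
      rfl
    rw [show vP - MvPolynomial.C r = Yv - (MvPolynomial.C r - Xv ^ 2) by rw [vP]; ring,
      map_sub, map_sub, map_pow, Ey_Yv, Ey_Xv, hC, ← map_pow, ← map_sub]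
  rw [this]
  exact Polynomial.irreducible_X_sub_C _


/-- "t-derivative": differentiate each coefficient. -/
def tder (f : Polynomial (Polynomial ℂ)) : Polynomial (Polynomial ℂ) :=
  f.sum fun i c => Polynomial.C (Polynomial.derivative c) * Polynomial.X ^ i

lemma tder_monomial (n : ℕ) (c : Polynomial ℂ) :
    tder (Polynomial.monomial n c) = Polynomial.C (Polynomial.derivative c) * Polynomial.X ^ n := by
  rw [tder, Polynomial.sum_monomial_index]
  simp

lemma tder_add (p q : Polynomial (Polynomial ℂ)) : tder (p + q) = tder p + tder q := by
  rw [tder, tder, tder, Polynomial.sum_add_index] <;> intros <;> simp [add_mul]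

lemma pderiv_aeval_vP (k : Fin 2) (c : Polynomial ℂ) :
    pderiv k (Polynomial.aeval vP c)
      = Polynomial.aeval vP (Polynomial.derivative c) * pderiv k vP := by
  have h := Derivation.comp_aeval_eq (a := vP) (pderiv k) c
  rw [smul_eq_mul] at h
  exact h

lemma chain_rule (k : Fin 2) (f : Polynomial (Polynomial ℂ)) :
    pderiv k (Φ f) = Φ (Polynomial.derivative f) * pderiv k uP
      + Φ (tder f) * pderiv k vP := by
  induction f using Polynomial.induction_on' with
  | add p q hp hq =>
    simp only [map_add, Polynomial.derivative_add, tder_add]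
    rw [hp, hq]; ring
  | monomial n c =>
    rw [Polynomial.derivative_monomial, tder_monomial]
    rw [← Polynomial.C_mul_X_pow_eq_monomial, ← Polynomial.C_mul_X_pow_eq_monomial]
    simp only [map_mul, map_pow, Φ_C, Φ_X]
    rw [pderiv_mul, pderiv_pow, pderiv_aeval_vP]
    rcases n with _ | m
    · simp
    · rw [map_natCast (Polynomial.aeval vP)]
      simp only [Nat.add_sub_cancel]
      ring
  
@[simp] lemma pderiv0_uP : pderiv 0 uP = 2 * Xv * Yv := by
  have h : (0:Fin 2) ≠ 1 := by decide
  simp [uP, Xv, Yv, pderiv_mul, pderiv_pow, pderiv_X_self, pderiv_X_of_ne (Ne.symm h)]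
  try ring

@[simp] lemma pderiv1_uP : pderiv 1 uP = Xv ^ 2 := by
  have h : (0:Fin 2) ≠ 1 := by decide
  simp [uP, Xv, Yv, pderiv_mul, pderiv_pow, pderiv_X_self, pderiv_X_of_ne h]

@[simp] lemma pderiv0_vP : pderiv 0 vP = 2 * Xv := by
  have h : (0:Fin 2) ≠ 1 := by decide
  simp [vP, Xv, Yv, pderiv_mul, pderiv_pow, pderiv_X_self, pderiv_X_of_ne (Ne.symm h)]
  try ring

@[simp] lemma pderiv1_vP : pderiv 1 vP = 1 := by
  have h : (0:Fin 2) ≠ 1 := by decide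
  simp [vP, Xv, Yv, pderiv_mul, pderiv_pow, pderiv_X_self, pderiv_X_of_ne h]

lemma dvd_pderiv_of_sq_dvd {Q g : Bp} (h : Q ^ 2 ∣ g) (k : Fin 2) :
    Q ∣ pderiv k g := by
  obtain ⟨h₁, rfl⟩ := h
  rw [show Q ^ 2 * h₁ = Q * (Q * h₁) by ring, pderiv_mul]
  exact dvd_add ((dvd_mul_right Q h₁).mul_left _) (dvd_mul_right Q _)


lemma irreducible_of_irreducible_C {c : Polynomial ℂ}
    (h : Irreducible (Polynomial.C c : Polynomial (Polynomial ℂ))) : Irreducible c := by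
  constructor
  · exact fun hu => h.not_isUnit (hu.map Polynomial.C)
  · intro a b hab
    rcases h.isUnit_or_isUnit (by rw [hab, Polynomial.C_mul]) with h' | h'
    · exact Or.inl (Polynomial.isUnit_C.mp h')
    · exact Or.inr (Polynomial.isUnit_C.mp h')

set_option synthInstance.maxHeartbeats 1000000 in
set_option maxHeartbeats 1000000 in
/-- Bezout argument in `ℂ(t)[s]` producing a factor `v - r`. -/
lemma bezout_B {f : Polynomial (Polynomial ℂ)} (hf : Irreducible f)
    (hf' : Polynomial.derivative f ≠ 0) {Q : Bp} (hQp : Prime Q)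
    (h1 : Q ∣ Φ f) (h2 : Q ∣ Φ (Polynomial.derivative f)) :
    ∃ r : ℂ, Q ∣ vP - MvPolynomial.C r := by
  classical
  have hprim : f.IsPrimitive := by
    intro r hr
    by_contra hru
    obtain ⟨g, hg⟩ := hr
    rcases hf.isUnit_or_isUnit hg with h | h
    · exact hru (Polynomial.isUnit_C.mp h)
    · obtain ⟨w, hw, hwg⟩ := Polynomial.isUnit_iff.mp h
      apply hf'
      rw [hg, ← hwg, ← Polynomial.C_mul, Polynomial.derivative_C]
  set K := RatFunc ℂ
  set φ := algebraMap (Polynomial ℂ) K with hφ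
  have hinj : Function.Injective φ := IsFractionRing.injective _ _
  set F := f.map φ with hF
  have hFirr : Irreducible F := hprim.irreducible_iff_irreducible_map_fraction_map.mp hf
  have hF0 : F ≠ 0 := hFirr.ne_zero
  have hF'0 : (Polynomial.derivative f).map φ ≠ 0 := by
    rwa [Ne, Polynomial.map_eq_zero_iff hinj]
  have hnd : ¬ F ∣ Polynomial.derivative F := by
    intro hdvd
    have hle := Polynomial.degree_le_of_dvd hdvd
      (by rw [hF, Polynomial.derivative_map]; exact hF'0)
    exact absurd hle (not_le.mpr (Polynomial.degree_derivative_lt hF0))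
  obtain ⟨a, b, hab⟩ := hFirr.coprime_iff_not_dvd.mpr hnd
  set M := nonZeroDivisors (Polynomial ℂ)
  obtain ⟨d₁, hd₁⟩ := IsLocalization.integerNormalization_map_to_map M a
  obtain ⟨d₂, hd₂⟩ := IsLocalization.integerNormalization_map_to_map M b
  set a₀ := IsLocalization.integerNormalization M a
  set b₀ := IsLocalization.integerNormalization M b
  have hsmul : ∀ (d : Polynomial ℂ) (p : Polynomial K), d • p = Polynomial.C (φ d) * p := by
    intro d p
    rw [← Polynomial.algebraMap_eq, ← IsScalarTower.algebraMap_apply, ← Algebra.smul_def]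
  have key : Polynomial.C (d₂ : Polynomial ℂ) * a₀ * f
      + Polynomial.C (d₁ : Polynomial ℂ) * b₀ * Polynomial.derivative f
      = Polynomial.C ((d₁ : Polynomial ℂ) * (d₂ : Polynomial ℂ)) := by
    apply Polynomial.map_injective φ hinj
    rw [Polynomial.map_add, Polynomial.map_mul, Polynomial.map_mul, Polynomial.map_mul,
      Polynomial.map_mul, Polynomial.map_C, Polynomial.map_C, Polynomial.map_C,
      hd₁, hd₂, hsmul d₁ a, hsmul d₂ b, ← Polynomial.derivative_map, map_mul,
      Polynomial.C_mul]
    linear_combination (Polynomial.C (φ (d₁ : Polynomial ℂ))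
      * Polynomial.C (φ (d₂ : Polynomial ℂ))) * hab
  have hQd : Q ∣ Polynomial.aeval vP ((d₁ : Polynomial ℂ) * (d₂ : Polynomial ℂ)) := by
    have hdv : Q ∣ Φ (Polynomial.C (d₂ : Polynomial ℂ) * a₀ * f
        + Polynomial.C (d₁ : Polynomial ℂ) * b₀ * Polynomial.derivative f) := by
      simp only [map_add, map_mul]
      exact dvd_add (h1.mul_left _) (h2.mul_left _)
    rw [key, Φ_C] at hdv
    exact hdv
  set d : Polynomial ℂ := (d₁ : Polynomial ℂ) * (d₂ : Polynomial ℂ) with hdd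
  have hdne : d ≠ 0 :=
    mul_ne_zero (nonZeroDivisors.ne_zero d₁.2) (nonZeroDivisors.ne_zero d₂.2)
  have hsplit := Polynomial.Splits.eq_prod_roots (IsAlgClosed.splits d)
  have himg : Polynomial.aeval vP d = MvPolynomial.C d.leadingCoeff *
      (d.roots.map (fun r => vP - MvPolynomial.C r)).prod := by
    conv_lhs => rw [hsplit]
    rw [map_mul, Polynomial.aeval_C, map_multiset_prod, Multiset.map_map]
    congr 1
    congr 1
    apply Multiset.map_congr rfl
    intro r _
    rw [Function.comp_apply, map_sub, Polynomial.aeval_X, Polynomial.aeval_C,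
      MvPolynomial.algebraMap_eq]
  rw [himg] at hQd
  have hlc : IsUnit (MvPolynomial.C d.leadingCoeff : Bp) := by
    have hne : d.leadingCoeff ≠ 0 := Polynomial.leadingCoeff_ne_zero.mpr hdne
    have := (isUnit_iff_ne_zero.mpr hne).map (algebraMap ℂ Bp)
    rwa [MvPolynomial.algebraMap_eq] at this
  have hprod : Q ∣ (d.roots.map (fun r => vP - MvPolynomial.C r)).prod :=
    (hQp.dvd_mul.mp hQd).resolve_left
      (fun h => hQp.not_unit (isUnit_of_dvd_unit h hlc))
  obtain ⟨z, hz, hQz⟩ := hQp.exists_mem_multiset_dvd hprod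
  obtain ⟨r, _, rfl⟩ := Multiset.mem_map.mp hz
  exact ⟨r, hQz⟩

/-- If `v - r` divides `Φ f` then `C (t - r)` divides `f`. -/
lemma C_dvd_of_vsub_dvd {f : Polynomial (Polynomial ℂ)} {r : ℂ}
    (h : (vP - MvPolynomial.C r) ∣ Φ f) :
    Polynomial.C (Polynomial.X - Polynomial.C r) ∣ f := by
  set ρ : Bp →ₐ[ℂ] Polynomial ℂ :=
    MvPolynomial.aeval ![Polynomial.X, Polynomial.C r - Polynomial.X ^ 2] with hρ
  have hρv : ρ vP = Polynomial.C r := by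
    simp [hρ, vP, Xv, Yv]
  have hρu : ρ uP = Polynomial.X ^ 2 * (Polynomial.C r - Polynomial.X ^ 2) := by
    simp [hρ, uP, Xv, Yv]
  have h0 : ρ (Φ f) = 0 := by
    obtain ⟨g, hg⟩ := h
    rw [hg, map_mul]
    have : ρ (vP - MvPolynomial.C r) = 0 := by
      rw [map_sub, hρv]
      have : ρ (MvPolynomial.C r : Bp) = Polynomial.C r := by
        rw [show (MvPolynomial.C r : Bp) = algebraMap ℂ Bp r from rfl, AlgHom.commutes]
        rfl
      rw [this, sub_self]
    rw [this, zero_mul]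
  rw [algHom_Φ, hρv] at h0
  have hring : ((Polynomial.aeval (Polynomial.C r : Polynomial ℂ)).toRingHom :
      Polynomial ℂ →+* Polynomial ℂ)
      = (Polynomial.C : ℂ →+* Polynomial ℂ).comp (Polynomial.evalRingHom r) := by
    refine RingHom.ext fun c => ?_
    show Polynomial.aeval (Polynomial.C r : Polynomial ℂ) c
      = Polynomial.C (Polynomial.eval r c)
    rw [show (Polynomial.C r : Polynomial ℂ) = algebraMap ℂ (Polynomial ℂ) r from rfl,
      Polynomial.aeval_algebraMap_apply_eq_algebraMap_eval]
    rfl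
  have hcomp : Polynomial.eval₂
      ((Polynomial.aeval (Polynomial.C r : Polynomial ℂ)).toRingHom) (ρ uP) f
      = (f.map (Polynomial.evalRingHom r)).comp (ρ uP) := by
    rw [Polynomial.comp, Polynomial.eval₂_map, hring]
  rw [hcomp] at h0
  have hmap0 : f.map (Polynomial.evalRingHom r) = 0 := by
    rcases Polynomial.comp_eq_zero_iff.mp h0 with h' | ⟨_, h'⟩
    · exact h'
    · exfalso
      have h4 : (ρ uP).coeff 4 = (-1 : ℂ) := by
        rw [hρu]
        have : Polynomial.X ^ 2 * (Polynomial.C r - Polynomial.X ^ 2)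
            = Polynomial.C r * Polynomial.X ^ 2 - Polynomial.X ^ 4 := by ring
        rw [this, Polynomial.coeff_sub, Polynomial.coeff_C_mul, Polynomial.coeff_X_pow,
          Polynomial.coeff_X_pow]
        norm_num
      rw [h'] at h4
      rw [Polynomial.coeff_C] at h4
      norm_num at h4
  rw [Polynomial.C_dvd_iff_dvd_coeff]
  intro i
  rw [Polynomial.dvd_iff_isRoot]
  have := congrArg (fun p => Polynomial.coeff p i) hmap0
  simpa [Polynomial.coeff_map] using this

/-- Main classification of ramified primes. -/
lemma classify {Q : Bp} (hQ : Irreducible Q) {f : Polynomial (Polynomial ℂ)}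
    (hf : Irreducible f) (hdvd : Q ^ 2 ∣ Φ f) :
    Associated Q Xv ∨ Associated Q (Yv - Xv ^ 2) := by
  have hQp : Prime Q := UniqueFactorizationMonoid.irreducible_iff_prime.mp hQ
  by_cases hx : Q ∣ Xv
  · exact Or.inl (hQ.associated_of_dvd irreducible_Xv hx)
  by_cases hy : Q ∣ (Yv - Xv ^ 2)
  · exact Or.inr (hQ.associated_of_dvd irreducible_YsubX2 hy)
  exfalso
  have hQf : Q ∣ Φ f := (dvd_pow_self Q (two_ne_zero)).trans hdvd
  have hd0 : Q ∣ pderiv 0 (Φ f) := dvd_pderiv_of_sq_dvd hdvd 0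
  have hd1 : Q ∣ pderiv 1 (Φ f) := dvd_pderiv_of_sq_dvd hdvd 1
  rw [chain_rule] at hd0 hd1
  rw [pderiv0_uP, pderiv0_vP] at hd0
  rw [pderiv1_uP, pderiv1_vP, mul_one] at hd1
  have hnu2 : IsUnit (2 : Bp) := by
    have h := (isUnit_iff_ne_zero.mpr (two_ne_zero (α := ℂ))).map (algebraMap ℂ Bp)
    rwa [map_ofNat] at h
  have hd0' : Q ∣ Xv * (2 * (Φ (Polynomial.derivative f) * Yv + Φ (tder f))) := by
    have heq : Φ (Polynomial.derivative f) * (2 * Xv * Yv) + Φ (tder f) * (2 * Xv)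
        = Xv * (2 * (Φ (Polynomial.derivative f) * Yv + Φ (tder f))) := by ring
    rwa [heq] at hd0
  have hA : Q ∣ Φ (Polynomial.derivative f) * Yv + Φ (tder f) := by
    have h2' := (hQp.dvd_mul.mp hd0').resolve_left hx
    exact (hQp.dvd_mul.mp h2').resolve_left
      (fun h => hQp.not_unit (isUnit_of_dvd_unit h hnu2))
  have hsub : Q ∣ Φ (Polynomial.derivative f) * (Yv - Xv ^ 2) := by
    have := dvd_sub hA hd1
    have heq : Φ (Polynomial.derivative f) * Yv + Φ (tder f)
        - (Φ (Polynomial.derivative f) * Xv ^ 2 + Φ (tder f))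
        = Φ (Polynomial.derivative f) * (Yv - Xv ^ 2) := by ring
    rwa [heq] at this
  have hQf' : Q ∣ Φ (Polynomial.derivative f) := (hQp.dvd_mul.mp hsub).resolve_right hy
  by_cases hf'0 : Polynomial.derivative f = 0
  · -- constant case: f = C c₀
    have hfc : f = Polynomial.C (f.coeff 0) := Polynomial.eq_C_of_derivative_eq_zero hf'0
    set c₀ := f.coeff 0 with hc₀def
    have hc₀ : Irreducible c₀ := irreducible_of_irreducible_C (hfc ▸ hf)
    have hQc : Q ∣ Polynomial.aeval vP c₀ := by
      rw [hfc, Φ_C] at hQf; exact hQf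
    have hQc' : Q ∣ Polynomial.aeval vP (Polynomial.derivative c₀) := by
      have htd : tder f = Polynomial.C (Polynomial.derivative c₀) := by
        conv_lhs => rw [hfc]
        rw [← Polynomial.monomial_zero_left, tder_monomial, pow_zero, mul_one]
      rw [hf'0, map_zero, zero_mul, zero_add, htd, Φ_C] at hd1
      exact hd1
    have hc'ne : Polynomial.derivative c₀ ≠ 0 := by
      intro hz
      have := Polynomial.eq_C_of_derivative_eq_zero hz
      have hne : c₀ ≠ 0 := hc₀.ne_zero
      have hcoe : c₀.coeff 0 ≠ 0 := by
        intro hcz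
        rw [hcz, Polynomial.C_0] at this
        exact hne this
      exact hc₀.not_isUnit (this ▸ Polynomial.isUnit_C.mpr (isUnit_iff_ne_zero.mpr hcoe))
    have hnd : ¬ c₀ ∣ Polynomial.derivative c₀ := by
      intro hdvd'
      have hle := Polynomial.degree_le_of_dvd hdvd' hc'ne
      exact absurd hle (not_le.mpr (Polynomial.degree_derivative_lt hc₀.ne_zero))
    obtain ⟨a, b, hab⟩ := hc₀.coprime_iff_not_dvd.mpr hnd
    have : Q ∣ (1 : Bp) := by
      have := congrArg (Polynomial.aeval vP) hab
      rw [map_add, map_mul, map_mul, map_one] at this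
      rw [← this]
      exact dvd_add (hQc.mul_left _) (hQc'.mul_left _)
    exact hQp.not_unit (isUnit_of_dvd_one this)
  · obtain ⟨r, hr⟩ := bezout_B hf hf'0 hQp hQf hQf'
    have hassoc : Associated Q (vP - MvPolynomial.C r) :=
      hQ.associated_of_dvd (irreducible_vP_sub r) hr
    have hvd : (vP - MvPolynomial.C r) ∣ Φ f := (hassoc.symm.dvd).trans hQf
    obtain ⟨g, hg⟩ := C_dvd_of_vsub_dvd hvd
    rcases hf.isUnit_or_isUnit hg with h | h
    · have : IsUnit (Polynomial.X - Polynomial.C r) := Polynomial.isUnit_C.mp h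
      exact Polynomial.not_isUnit_X_sub_C r this
    · obtain ⟨w, hw, hwg⟩ := Polynomial.isUnit_iff.mp h
      apply hf'0
      rw [hg, ← hwg, ← Polynomial.C_mul, Polynomial.derivative_C]


lemma mem_Φ (f : Polynomial (Polynomial ℂ)) : Φ f ∈ A16 := by
  rw [← Φ_range]; exact ⟨f, rfl⟩

lemma exists_Φ (p : A16) : ∃ f, Φ f = (p : Bp) := by
  have h : (p : Bp) ∈ Φ.range := by rw [Φ_range]; exact p.2
  obtain ⟨f, hf⟩ := h
  exact ⟨f, hf⟩

def P1 : A16 := ⟨uP, uP_mem⟩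

lemma irr_P1 : Irreducible P1 := by
  have h : ΦE Polynomial.X = P1 := Subtype.ext (by rw [ΦE_val, Φ_X]; rfl)
  rw [← h]
  exact irreducible_ΦE.mpr Polynomial.prime_X.irreducible

/-- the root `t²/4`. -/
def aQ : Polynomial ℂ := Polynomial.C (4⁻¹ : ℂ) * Polynomial.X ^ 2

/-- the polynomial `t² - 4s` (as `-4·(s - t²/4)`). -/
def f2 : Polynomial (Polynomial ℂ) :=
  Polynomial.C (Polynomial.C (-4 : ℂ)) * (Polynomial.X - Polynomial.C aQ)

lemma Φ_f2 : Φ f2 = (Yv - Xv ^ 2) ^ 2 := by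
  rw [f2, map_mul, map_sub, Φ_X, Φ_C, Φ_C]
  rw [aQ, map_mul, Polynomial.aeval_C, map_pow, Polynomial.aeval_X]
  rw [Polynomial.aeval_C]
  have e1 : (MvPolynomial.C (-4:ℂ) : Bp) * (MvPolynomial.C (4⁻¹:ℂ) * vP ^ 2)
      = - vP ^ 2 := by
    rw [← mul_assoc, ← map_mul]
    norm_num
  have e2 : (MvPolynomial.C (-4:ℂ) : Bp) = -(4 : Bp) := by
    have : (-4 : ℂ) = -(4:ℂ) := by norm_num
    rw [this, map_neg, map_ofNat]
  simp only [MvPolynomial.algebraMap_eq]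
  rw [mul_sub, e1, e2, uP, vP, Yv, Xv]
  ring

lemma hu4 : IsUnit (Polynomial.C (Polynomial.C (-4:ℂ)) : Polynomial (Polynomial ℂ)) :=
  Polynomial.isUnit_C.mpr (Polynomial.isUnit_C.mpr (by norm_num))

lemma irr_f2 : Irreducible f2 := by
  have hm : Irreducible (Polynomial.X - Polynomial.C aQ :
      Polynomial (Polynomial ℂ)) := Polynomial.irreducible_X_sub_C aQ
  have hassoc : Associated (Polynomial.X - Polynomial.C aQ) f2 :=
    ⟨hu4.unit, by rw [IsUnit.unit_spec, f2]; ring⟩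
  exact hassoc.irreducible hm

def P2 : A16 := ⟨(Yv - Xv ^ 2) ^ 2, by rw [← Φ_f2]; exact mem_Φ f2⟩

lemma irr_P2 : Irreducible P2 := by
  have h : ΦE f2 = P2 := Subtype.ext (by rw [ΦE_val, Φ_f2]; rfl)
  rw [← h]
  exact irreducible_ΦE.mpr irr_f2

lemma comap_X : (Ideal.span {Xv}).comap (algebraMap A16 Bp) = Ideal.span {P1} := by
  apply le_antisymm
  · intro p hp
    rw [Ideal.mem_comap] at hp
    have hdvd : Xv ∣ (p : Bp) := Ideal.mem_span_singleton.mp hp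
    obtain ⟨f, hf⟩ := exists_Φ p
    have hc0 : f.coeff 0 = 0 := by
      set ρ : Bp →ₐ[ℂ] Polynomial ℂ :=
        MvPolynomial.aeval ![0, Polynomial.X] with hρdef
      have hρX : ρ Xv = 0 := by simp [hρdef, Xv]
      have hρv : ρ vP = Polynomial.X := by simp [hρdef, vP, Xv, Yv]
      have hρu : ρ uP = 0 := by simp [hρdef, uP, Xv, Yv]
      have h0 : ρ (p : Bp) = 0 := by
        obtain ⟨g, hg⟩ := hdvd
        rw [hg, map_mul, hρX, zero_mul]
      rw [← hf, algHom_Φ, hρv, hρu, Polynomial.eval₂_at_zero] at h0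
      rwa [show ((Polynomial.aeval (Polynomial.X : Polynomial ℂ)).toRingHom) (f.coeff 0)
        = f.coeff 0 from Polynomial.aeval_X_left_apply _] at h0
    obtain ⟨g, hg⟩ := Polynomial.X_dvd_iff.mpr hc0
    rw [Ideal.mem_span_singleton]
    refine ⟨⟨Φ g, mem_Φ g⟩, ?_⟩
    apply Subtype.ext
    show (p : Bp) = uP * Φ g
    rw [← hf, hg, map_mul, Φ_X]
  · rw [Ideal.span_singleton_le_iff_mem, Ideal.mem_comap]
    show (P1 : Bp) ∈ Ideal.span {Xv}
    rw [Ideal.mem_span_singleton]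
    exact ⟨Xv * Yv, by show uP = _; rw [uP]; ring⟩

lemma comap_Y : (Ideal.span {Yv - Xv ^ 2}).comap (algebraMap A16 Bp)
    = Ideal.span {P2} := by
  apply le_antisymm
  · intro p hp
    rw [Ideal.mem_comap] at hp
    have hdvd : (Yv - Xv ^ 2) ∣ (p : Bp) := Ideal.mem_span_singleton.mp hp
    obtain ⟨f, hf⟩ := exists_Φ p
    have heval : Polynomial.eval aQ f = 0 := by
      set ρ : Bp →ₐ[ℂ] Polynomial ℂ :=
        MvPolynomial.aeval ![Polynomial.X, Polynomial.X ^ 2] with hρdef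
      have hρ0 : ρ (Yv - Xv ^ 2) = 0 := by simp [hρdef, Xv, Yv]
      have h0 : ρ (p : Bp) = 0 := by
        obtain ⟨g, hg⟩ := hdvd
        rw [hg, map_mul, hρ0, zero_mul]
      rw [← hf, algHom_Φ] at h0
      have hρv : ρ vP = 2 * Polynomial.X ^ 2 := by
        show ρ (Xv ^ 2 + Yv) = _
        rw [map_add, map_pow]
        simp [hρdef, Xv, Yv]
        ring
      have hρu : ρ uP = Polynomial.X ^ 4 := by
        show ρ (Xv ^ 2 * Yv) = _
        rw [map_mul, map_pow]
        simp [hρdef, Xv, Yv]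
        ring
      rw [hρv, hρu] at h0
      set ψ : Polynomial ℂ →+* Polynomial ℂ :=
        ((Polynomial.aeval (2 * Polynomial.X ^ 2 : Polynomial ℂ)).toRingHom :
          Polynomial ℂ →+* Polynomial ℂ) with hψdef
      have hψcomp : ∀ c : Polynomial ℂ, ψ c = c.comp (2 * Polynomial.X ^ 2) := by
        intro c
        show Polynomial.aeval _ c = _
        rw [Polynomial.aeval_def, Polynomial.comp, Polynomial.algebraMap_eq]
      have hψinj : Function.Injective ψ := by
        rw [injective_iff_map_eq_zero]
        intro c hc
        rw [hψcomp] at hc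
        rcases Polynomial.comp_eq_zero_iff.mp hc with h' | ⟨_, h'⟩
        · exact h'
        · exfalso
          have hco : (2 * Polynomial.X ^ 2 : Polynomial ℂ).coeff 2 = 2 := by
            rw [Polynomial.coeff_ofNat_mul, Polynomial.coeff_X_pow]
            norm_num
          rw [h', Polynomial.coeff_C] at hco
          norm_num at hco
      have hψa : ψ aQ = Polynomial.X ^ 4 := by
        rw [hψcomp, aQ, Polynomial.mul_comp, Polynomial.pow_comp, Polynomial.X_comp,
          Polynomial.C_comp]
        have h4 : (Polynomial.C (4:ℂ)) = (4 : Polynomial ℂ) := map_ofNat Polynomial.C 4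
        have hc : Polynomial.C (4⁻¹:ℂ) * Polynomial.C (4:ℂ) = 1 := by
          rw [← Polynomial.C_mul]; norm_num
        calc Polynomial.C (4⁻¹:ℂ) * ((2 : Polynomial ℂ) * Polynomial.X ^ 2) ^ 2
            = Polynomial.C (4⁻¹:ℂ) * Polynomial.C (4:ℂ) * Polynomial.X ^ 4 := by
              rw [h4]; ring
          _ = Polynomial.X ^ 4 := by rw [hc, one_mul]
      apply hψinj
      rw [map_zero]
      have heval2 : Polynomial.eval aQ f = Polynomial.eval₂ (RingHom.id _) aQ f := rfl
      rw [heval2, Polynomial.hom_eval₂, RingHom.comp_id, hψa]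
      exact h0
    have hm : (Polynomial.X - Polynomial.C aQ) ∣ f := Polynomial.dvd_iff_isRoot.mpr heval
    obtain ⟨g, hg⟩ := hm
    rw [Ideal.mem_span_singleton]
    refine ⟨⟨Φ (Polynomial.C (Polynomial.C ((-4:ℂ)⁻¹)) * g), mem_Φ _⟩, ?_⟩
    apply Subtype.ext
    show (p : Bp) = (Yv - Xv ^ 2) ^ 2 * Φ (Polynomial.C (Polynomial.C ((-4:ℂ)⁻¹)) * g)
    rw [← Φ_f2, ← hf, ← map_mul]
    refine congrArg Φ ?_
    have hc : Polynomial.C (Polynomial.C (-4:ℂ))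
        * Polynomial.C (Polynomial.C ((-4:ℂ)⁻¹)) = 1 := by
      rw [← Polynomial.C_mul, ← Polynomial.C_mul]
      norm_num
    rw [hg, f2]
    calc (Polynomial.X - Polynomial.C aQ) * g
        = (Polynomial.C (Polynomial.C (-4:ℂ)) * Polynomial.C (Polynomial.C ((-4:ℂ)⁻¹)))
          * ((Polynomial.X - Polynomial.C aQ) * g) := by rw [hc, one_mul]
      _ = Polynomial.C (Polynomial.C (-4:ℂ)) * (Polynomial.X - Polynomial.C aQ)
          * (Polynomial.C (Polynomial.C ((-4:ℂ)⁻¹)) * g) := by ring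
  · rw [Ideal.span_singleton_le_iff_mem, Ideal.mem_comap]
    show (P2 : Bp) ∈ Ideal.span {Yv - Xv ^ 2}
    rw [Ideal.mem_span_singleton]
    exact ⟨Yv - Xv ^ 2, by show (Yv - Xv ^2)^2 = _; ring⟩


def ρ0 : Bp →ₐ[ℂ] Polynomial ℂ := MvPolynomial.aeval ![0, Polynomial.X]

@[simp] lemma ρ0_Xv : ρ0 Xv = 0 := by simp [ρ0, Xv]
@[simp] lemma ρ0_Yv : ρ0 Yv = Polynomial.X := by simp [ρ0, Yv]

lemma Xv_ne_zero : (Xv : Bp) ≠ 0 := by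
  rw [Xv]; exact MvPolynomial.X_ne_zero 0

lemma YsubX2_ne_zero : (Yv - Xv ^ 2 : Bp) ≠ 0 := by
  intro h
  have := congrArg ρ0 h
  rw [map_sub, map_pow, ρ0_Xv, ρ0_Yv, map_zero] at this
  simpa using this

lemma Xv_not_dvd_YsubX2 : ¬ (Xv ∣ (Yv - Xv ^ 2)) := by
  rintro ⟨g, hg⟩
  have := congrArg ρ0 hg
  rw [map_sub, map_pow, map_mul, ρ0_Xv, ρ0_Yv, zero_mul] at this
  simpa using this

lemma multis_X : MultIs Xv uP 2 := by
  constructor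
  · exact ⟨Yv, by rw [uP]⟩
  · rintro ⟨g, hg⟩
    have hY : Yv = Xv * g := by
      apply mul_left_cancel₀ (pow_ne_zero 2 Xv_ne_zero)
      rw [show Xv ^ 2 * Yv = uP from rfl, hg]
      ring
    have := congrArg ρ0 hY
    rw [map_mul, ρ0_Xv, ρ0_Yv, zero_mul] at this
    exact Polynomial.X_ne_zero this

lemma multis_Y : MultIs (Yv - Xv ^ 2) ((Yv - Xv ^ 2) ^ 2) 2 := by
  constructor
  · exact dvd_refl _
  · rintro ⟨g, hg⟩
    have h1 : (1 : Bp) = (Yv - Xv ^ 2) * g := by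
      apply mul_left_cancel₀ (pow_ne_zero 2 YsubX2_ne_zero)
      rw [mul_one]
      conv_lhs => rw [hg]
      ring
    exact irreducible_YsubX2.not_isUnit (IsUnit.of_mul_eq_one _ h1.symm)

lemma multis_eq_two {Q P : Bp} {e : ℕ} (h2 : MultIs Q P 2) (he : MultIs Q P e) :
    e = 2 := by
  by_contra hne
  rcases lt_or_gt_of_ne hne with hlt | hgt
  · exact he.2 ((pow_dvd_pow Q (by omega)).trans h2.1)
  · exact h2.2 ((pow_dvd_pow Q (by omega)).trans he.1)

lemma multis_of_assoc {Q Q' P P' : Bp} {e : ℕ} (hQ : Associated Q Q')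
    (hP : Associated P P') (h : MultIs Q P e) : MultIs Q' P' e := by
  constructor
  · exact (hQ.pow_pow.dvd_iff_dvd_left).mp (h.1.trans hP.dvd)
  · intro hd
    exact h.2 ((hQ.pow_pow.dvd_iff_dvd_left).mpr (hd.trans hP.symm.dvd))

lemma ramidx_X : RamIdx A16 Xv 2 := ⟨P1, irr_P1, comap_X, multis_X⟩

lemma ramidx_Y : RamIdx A16 (Yv - Xv ^ 2) 2 := ⟨P2, irr_P2, comap_Y, multis_Y⟩

lemma isram_X : IsRamified A16 Xv := ⟨irreducible_Xv, 2, ramidx_X, one_lt_two⟩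

lemma isram_Y : IsRamified A16 (Yv - Xv ^ 2) :=
  ⟨irreducible_YsubX2, 2, ramidx_Y, one_lt_two⟩

lemma e_eq_two_X {Q : Bp} {e : ℕ} (hQ : Associated Q Xv) (h : RamIdx A16 Q e) :
    e = 2 := by
  obtain ⟨P, hPirr, hcomap, hmult⟩ := h
  have hspan : Ideal.span {Q} = Ideal.span {Xv} :=
    Ideal.span_singleton_eq_span_singleton.mpr hQ
  have hPP1 : Associated P P1 := by
    apply Ideal.span_singleton_eq_span_singleton.mp
    rw [← hcomap, hspan, comap_X]
  have hval : Associated (P : Bp) uP := Associated.map A16.val hPP1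
  exact multis_eq_two multis_X (multis_of_assoc hQ hval hmult)

lemma e_eq_two_Y {Q : Bp} {e : ℕ} (hQ : Associated Q (Yv - Xv ^ 2))
    (h : RamIdx A16 Q e) : e = 2 := by
  obtain ⟨P, hPirr, hcomap, hmult⟩ := h
  have hspan : Ideal.span {Q} = Ideal.span {Yv - Xv ^ 2} :=
    Ideal.span_singleton_eq_span_singleton.mpr hQ
  have hPP2 : Associated P P2 := by
    apply Ideal.span_singleton_eq_span_singleton.mp
    rw [← hcomap, hspan, comap_Y]
  have hval : Associated (P : Bp) ((Yv - Xv ^ 2) ^ 2) := Associated.map A16.val hPP2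
  exact multis_eq_two multis_Y (multis_of_assoc hQ hval hmult)

end NWRAux

theorem example_not_well_ramified :
    Xv ^ 2 * (Yv - Xv ^ 2) ^ 2 ∉ A16 ∧
    ∀ (S : Finset (MvPolynomial (Fin 2) ℂ)) (eIdx : MvPolynomial (Fin 2) ℂ → ℕ),
      RamReps A16 S eIdx → (∏ Q ∈ S, Q ^ eIdx Q) ∉ A16 := by
  constructor
  · have h := NWRAux.not_mem_A16 1 isUnit_one
    rwa [mul_one] at h
  · rintro S eIdx ⟨h1, h2, h3⟩ hmem
    have hclass : ∀ Q ∈ S, Associated Q Xv ∨ Associated Q (Yv - Xv ^ 2) := by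
      intro Q hQS
      obtain ⟨hQirr, hQram, hQe⟩ := h1 Q hQS
      obtain ⟨P, hPirr, hcomap, hmult⟩ := hQram
      obtain ⟨f, hf⟩ := NWRAux.exists_Φ P
      have hsq : Q ^ 2 ∣ NWRAux.Φ f := by
        rw [hf]
        exact (pow_dvd_pow Q (by omega)).trans hmult.1
      exact NWRAux.classify hQirr (NWRAux.irreducible_of_val hPirr hf) hsq
    obtain ⟨qx, ⟨hqxS, hqxA⟩, hqxU⟩ := h3 Xv NWRAux.isram_X
    obtain ⟨qy, ⟨hqyS, hqyA⟩, hqyU⟩ := h3 (Yv - Xv ^ 2) NWRAux.isram_Y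
    have hXnotY : ¬ Associated Xv (Yv - Xv ^ 2) := by
      intro h
      exact NWRAux.Xv_not_dvd_YsubX2 h.dvd
    have hne : qx ≠ qy := by
      rintro rfl
      exact hXnotY (hqxA.trans hqyA.symm)
    have hSeq : S = {qx, qy} := by
      ext Q
      constructor
      · intro hQS
        rcases hclass Q hQS with h | h
        · rw [hqxU Q ⟨hQS, h.symm⟩]
          exact Finset.mem_insert_self _ _
        · rw [hqyU Q ⟨hQS, h.symm⟩]
          exact Finset.mem_insert_of_mem (Finset.mem_singleton_self _)
      · intro hQm
        rcases Finset.mem_insert.mp hQm with rfl | hQm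
        · exact hqxS
        · rw [Finset.mem_singleton.mp hQm]
          exact hqyS
    rw [hSeq, Finset.prod_insert (by simp [hne]), Finset.prod_singleton] at hmem
    have hex : eIdx qx = 2 := NWRAux.e_eq_two_X hqxA.symm (h1 qx hqxS).2.1
    have hey : eIdx qy = 2 := NWRAux.e_eq_two_Y hqyA.symm (h1 qy hqyS).2.1
    rw [hex, hey] at hmem
    have hassoc : Associated (Xv ^ 2 * (Yv - Xv ^ 2) ^ 2) (qx ^ 2 * qy ^ 2) :=
      Associated.mul_mul hqxA.pow_pow hqyA.pow_pow
    obtain ⟨w, hw⟩ := hassoc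
    exact NWRAux.not_mem_A16 w w.isUnit (hw ▸ hmem)
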